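/- arXiv:2605.24979 — 2 statements merged into one kernel-verified Lean document; each statement's English description precedes it below -/
import Mathlib

section
/- Let G be a group, r : G → Q a function, and suppose r is an 'invariant of order less than n' in the sense that for all choices of elements w_0,...,w_n ∈ G and pairs (u_j, v_j) from a fixed set P of pairs of elements of G, the alternating sum over subsets s ⊆ {1,...,n} of (-1)^{|s|} r(w_0 t_1 w_1 ⋯ t_n w_n) vanishes (t_j = v_j if j ∈ s, else u_j). Let J be the two-sided ideal of Q[G] generated by {u - v : (u,v) ∈ P}. Then the linear extension f of r vanishes on J^n. -/
open MonoidAlgebra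

/-- `tsPow J n` is the `n`-th power of the two-sided ideal `J`:
`tsPow J 0 = ⊤` and `tsPow J (n+1)` is generated by products `a * b`
with `a ∈ J` and `b ∈ tsPow J n`; in particular `tsPow J 1 = J`. -/
def tsPow {A : Type*} [Ring A] (J : TwoSidedIdeal A) : ℕ → TwoSidedIdeal A
  | 0 => ⊤
  | n + 1 => TwoSidedIdeal.span {x | ∃ a ∈ J, ∃ b ∈ tsPow J n, x = a * b}

/-- Noncommutative expansion of a product of differences over a duplicate-free list. -/
lemma list_expand {A : Type*} [Ring A] [Algebra ℚ A] {ι : Type*} [DecidableEq ι]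
    (a b : ι → A) :
    ∀ (l : List ι), l.Nodup →
      (l.map fun i => a i - b i).prod =
        ∑ s ∈ l.toFinset.powerset, ((-1 : ℚ) ^ s.card) •
          (l.map fun i => if i ∈ s then b i else a i).prod := by
  intro l
  induction l with
  | nil => simp
  | cons i l ih =>
    intro hnd
    rw [List.nodup_cons] at hnd
    obtain ⟨hi, hnd⟩ := hnd
    have hi' : i ∉ l.toFinset := by simpa using hi
    rw [List.map_cons, List.prod_cons, List.toFinset_cons,
      Finset.sum_powerset_insert hi'
        (fun s => ((-1 : ℚ) ^ s.card) •
          ((i :: l).map fun j => if j ∈ s then b j else a j).prod),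
      ih hnd, sub_mul]
    have e1 : ∀ s ∈ l.toFinset.powerset,
        ((-1 : ℚ) ^ s.card) • ((i :: l).map fun j => if j ∈ s then b j else a j).prod =
          a i * (((-1 : ℚ) ^ s.card) • (l.map fun j => if j ∈ s then b j else a j).prod) := by
      intro s hs
      rw [Finset.mem_powerset] at hs
      have hins : i ∉ s := fun h => hi' (hs h)
      rw [List.map_cons, List.prod_cons, if_neg hins, mul_smul_comm]
    have e2 : ∀ s ∈ l.toFinset.powerset,
        ((-1 : ℚ) ^ (insert i s).card) •
            ((i :: l).map fun j => if j ∈ insert i s then b j else a j).prod =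
          -(b i * (((-1 : ℚ) ^ s.card) • (l.map fun j => if j ∈ s then b j else a j).prod)) := by
      intro s hs
      rw [Finset.mem_powerset] at hs
      have hins : i ∉ s := fun h => hi' (hs h)
      have hl : (l.map fun j => if j ∈ insert i s then b j else a j) =
          l.map fun j => if j ∈ s then b j else a j := by
        refine List.map_congr_left fun j hj => ?_
        have hne : j ≠ i := fun h => hi (h ▸ hj)
        simp [Finset.mem_insert, hne]
      rw [List.map_cons, List.prod_cons, if_pos (Finset.mem_insert_self i s), hl,
        Finset.card_insert_of_notMem hins, pow_succ, mul_smul, neg_one_smul, smul_neg,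
        mul_smul_comm]
    rw [Finset.sum_congr rfl e1, Finset.sum_congr rfl e2, ← Finset.mul_sum,
      Finset.sum_neg_distrib, ← Finset.mul_sum, ← sub_eq_add_neg]

section Aux

variable {G : Type*} [Group G] (P : Set (G × G))

/-- Recursive generating set for the `n`-th power. -/
noncomputable def genSet : ℕ → Set (MonoidAlgebra ℚ G)
  | 0 => Set.range (of ℚ G)
  | n + 1 => {x | ∃ g : G, ∃ p ∈ P, ∃ t ∈ genSet n,
      x = of ℚ G g * (of ℚ G p.1 - of ℚ G p.2) * t}

/-- The span of the generating set. -/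
noncomputable def genMod (n : ℕ) : Submodule ℚ (MonoidAlgebra ℚ G) :=
  Submodule.span ℚ (genSet P n)

lemma of_mul_mem_genSet {n : ℕ} (g : G) {t : MonoidAlgebra ℚ G}
    (ht : t ∈ genSet P n) : of ℚ G g * t ∈ genSet P n := by
  cases n with
  | zero =>
    obtain ⟨h, rfl⟩ := ht
    exact ⟨g * h, by rw [map_mul]⟩
  | succ n =>
    obtain ⟨g', p, hp, t', ht', rfl⟩ := ht
    exact ⟨g * g', p, hp, t', ht', by rw [map_mul, mul_assoc, mul_assoc, mul_assoc]⟩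

lemma mem_genSet_mul_of {n : ℕ} (g : G) {t : MonoidAlgebra ℚ G}
    (ht : t ∈ genSet P n) : t * of ℚ G g ∈ genSet P n := by
  induction n generalizing t with
  | zero =>
    obtain ⟨h, rfl⟩ := ht
    exact ⟨h * g, by rw [map_mul]⟩
  | succ n ih =>
    obtain ⟨g', p, hp, t', ht', rfl⟩ := ht
    exact ⟨g', p, hp, t' * of ℚ G g, ih ht', by simp only [mul_assoc]⟩

lemma span_range_of_top :
    Submodule.span ℚ (Set.range (of ℚ G)) = ⊤ := by
  rw [eq_top_iff]
  rintro x -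
  induction x using MonoidAlgebra.induction_linear with
  | zero => exact Submodule.zero_mem _
  | add f g hf hg => exact Submodule.add_mem _ hf hg
  | single a c =>
    have : (MonoidAlgebra.single a c : MonoidAlgebra ℚ G) = c • of ℚ G a := by
      rw [MonoidAlgebra.smul_of]
    rw [this]
    exact Submodule.smul_mem _ _ (Submodule.subset_span ⟨a, rfl⟩)

lemma of_mul_mem_genMod {n : ℕ} (g : G) {x : MonoidAlgebra ℚ G}
    (hx : x ∈ genMod P n) : of ℚ G g * x ∈ genMod P n := by
  induction hx using Submodule.span_induction with
  | mem t ht => exact Submodule.subset_span (of_mul_mem_genSet P g ht)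
  | zero => rw [mul_zero]; exact Submodule.zero_mem _
  | add x y _ _ hx hy => rw [mul_add]; exact Submodule.add_mem _ hx hy
  | smul c x _ hx => rw [mul_smul_comm]; exact Submodule.smul_mem _ _ hx

lemma mem_genMod_mul_of {n : ℕ} (g : G) {x : MonoidAlgebra ℚ G}
    (hx : x ∈ genMod P n) : x * of ℚ G g ∈ genMod P n := by
  induction hx using Submodule.span_induction with
  | mem t ht => exact Submodule.subset_span (mem_genSet_mul_of P g ht)
  | zero => rw [zero_mul]; exact Submodule.zero_mem _
  | add x y _ _ hx hy => rw [add_mul]; exact Submodule.add_mem _ hx hy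
  | smul c x _ hx => rw [smul_mul_assoc]; exact Submodule.smul_mem _ _ hx

lemma mul_mem_genMod {n : ℕ} (y : MonoidAlgebra ℚ G) {x : MonoidAlgebra ℚ G}
    (hx : x ∈ genMod P n) : y * x ∈ genMod P n := by
  have hy : y ∈ (genMod P n).comap (LinearMap.mulRight ℚ x) := by
    have hle : Submodule.span ℚ (Set.range (of ℚ G)) ≤
        (genMod P n).comap (LinearMap.mulRight ℚ x) := by
      rw [Submodule.span_le]
      rintro _ ⟨g, rfl⟩
      exact of_mul_mem_genMod P g hx
    exact hle (by rw [span_range_of_top]; trivial)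
  exact hy

lemma genMod_mul_mem {n : ℕ} (y : MonoidAlgebra ℚ G) {x : MonoidAlgebra ℚ G}
    (hx : x ∈ genMod P n) : x * y ∈ genMod P n := by
  have hy : y ∈ (genMod P n).comap (LinearMap.mulLeft ℚ x) := by
    have hle : Submodule.span ℚ (Set.range (of ℚ G)) ≤
        (genMod P n).comap (LinearMap.mulLeft ℚ x) := by
      rw [Submodule.span_le]
      rintro _ ⟨g, rfl⟩
      exact mem_genMod_mul_of P g hx
    exact hle (by rw [span_range_of_top]; trivial)
  exact hy

/-- `genMod P n` as a two-sided ideal. -/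
noncomputable def genIdeal (n : ℕ) : TwoSidedIdeal (MonoidAlgebra ℚ G) :=
  TwoSidedIdeal.mk' (genMod P n : Set (MonoidAlgebra ℚ G))
    ((genMod P n).zero_mem)
    (fun hx hy => (genMod P n).add_mem hx hy)
    (fun hx => (genMod P n).neg_mem hx)
    (fun hy => mul_mem_genMod P _ hy)
    (fun hx => genMod_mul_mem P _ hx)

lemma mem_genIdeal_iff {n : ℕ} {x : MonoidAlgebra ℚ G} :
    x ∈ genIdeal P n ↔ x ∈ genMod P n := by
  simp [genIdeal]

lemma diff_mul_mem_genMod {n : ℕ} {u v : G} (huv : (u, v) ∈ P)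
    {b : MonoidAlgebra ℚ G} (hb : b ∈ genMod P n) :
    (of ℚ G u - of ℚ G v) * b ∈ genMod P (n + 1) := by
  induction hb using Submodule.span_induction with
  | mem t ht =>
    refine Submodule.subset_span ⟨1, (u, v), huv, t, ht, ?_⟩
    rw [map_one, one_mul]
  | zero => rw [mul_zero]; exact Submodule.zero_mem _
  | add x y _ _ hx hy => rw [mul_add]; exact Submodule.add_mem _ hx hy
  | smul c x _ hx => rw [mul_smul_comm]; exact Submodule.smul_mem _ _ hx

/-- The key two-sided ideal argument: elements of `J` multiply `genMod P n` into
`genMod P (n+1)`. -/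
lemma J_mul_mem {n : ℕ} {a : MonoidAlgebra ℚ G}
    (ha : a ∈ TwoSidedIdeal.span
      {x : MonoidAlgebra ℚ G | ∃ p ∈ P, x = of ℚ G p.1 - of ℚ G p.2})
    {b : MonoidAlgebra ℚ G} (hb : b ∈ genMod P n) :
    a * b ∈ genMod P (n + 1) := by
  let K : TwoSidedIdeal (MonoidAlgebra ℚ G) :=
    TwoSidedIdeal.mk' {a | ∀ b ∈ genMod P n, a * b ∈ genMod P (n + 1)}
      (fun b _ => by rw [zero_mul]; exact Submodule.zero_mem _)
      (fun {x y} hx hy b hb => by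
        rw [add_mul]; exact Submodule.add_mem _ (hx b hb) (hy b hb))
      (fun {x} hx b hb => by rw [neg_mul]; exact Submodule.neg_mem _ (hx b hb))
      (fun {x y} hy b hb => by
        rw [mul_assoc]; exact mul_mem_genMod P x (hy b hb))
      (fun {x y} hx b hb => by
        rw [mul_assoc]; exact hx (y * b) (mul_mem_genMod P y hb))
  have haK : a ∈ K := by
    refine TwoSidedIdeal.mem_span_iff.mp ha K ?_
    rintro _ ⟨p, hp, rfl⟩
    rw [SetLike.mem_coe, TwoSidedIdeal.mem_mk']
    exact fun b hb => diff_mul_mem_genMod P hp hb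
  rw [TwoSidedIdeal.mem_mk'] at haK
  exact haK b hb

lemma tsPow_subset_genMod (n : ℕ) :
    ∀ x ∈ tsPow (TwoSidedIdeal.span
      {x : MonoidAlgebra ℚ G | ∃ p ∈ P, x = of ℚ G p.1 - of ℚ G p.2}) n,
    x ∈ genMod P n := by
  induction n with
  | zero =>
    intro x _
    show x ∈ Submodule.span ℚ (Set.range (of ℚ G))
    rw [span_range_of_top]; trivial
  | succ n ih =>
    intro x hx
    rw [show tsPow (TwoSidedIdeal.span
        {x : MonoidAlgebra ℚ G | ∃ p ∈ P, x = of ℚ G p.1 - of ℚ G p.2}) (n+1) =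
        TwoSidedIdeal.span _ from rfl, TwoSidedIdeal.mem_span_iff] at hx
    have := hx (genIdeal P (n + 1)) ?_
    · rwa [mem_genIdeal_iff] at this
    · rintro _ ⟨a, ha, b, hb, rfl⟩
      rw [SetLike.mem_coe, mem_genIdeal_iff]
      exact J_mul_mem P ha (ih b hb)

lemma genSet_structure : ∀ (n : ℕ), ∀ t ∈ genSet P n,
    ∃ (w : Fin (n + 1) → G) (q : Fin n → G × G), (∀ j, q j ∈ P) ∧
      t = of ℚ G (w 0) * (List.ofFn fun j : Fin n =>
        (of ℚ G (q j).1 - of ℚ G (q j).2) * of ℚ G (w j.succ)).prod := by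
  intro n
  induction n with
  | zero =>
    rintro _ ⟨g, rfl⟩
    exact ⟨fun _ => g, Fin.elim0, fun j => j.elim0, by simp⟩
  | succ n ih =>
    rintro _ ⟨g, p, hp, t, ht, rfl⟩
    obtain ⟨w', q', hq', rfl⟩ := ih t ht
    refine ⟨Fin.cons g w', Fin.cons p q', fun j => ?_, ?_⟩
    · refine Fin.cases (by simpa using hp) (fun i => by simpa using hq' i) j
    · rw [List.ofFn_succ, List.prod_cons]
      simp only [Fin.cons_zero, Fin.cons_succ]
      simp only [mul_assoc]

end Aux

theorem order_lt_n_vanishes_on_pow {G : Type*} [Group G] (n : ℕ)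
    (P : Set (G × G)) (r : G → ℚ)
    (f : MonoidAlgebra ℚ G →ₗ[ℚ] ℚ) (hf : ∀ g : G, f (of ℚ G g) = r g)
    (hr : ∀ (w : Fin (n + 1) → G) (q : Fin n → G × G), (∀ j, q j ∈ P) →
      ∑ s : Finset (Fin n), ((-1 : ℚ) ^ s.card) *
        r (w 0 * (List.ofFn fun j : Fin n =>
          (if j ∈ s then (q j).2 else (q j).1) * w j.succ).prod) = 0) :
    ∀ x ∈ tsPow
        (TwoSidedIdeal.span
          {x : MonoidAlgebra ℚ G | ∃ p ∈ P, x = of ℚ G p.1 - of ℚ G p.2}) n,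
      f x = 0 := by
  intro x hx
  have hx' : x ∈ genMod P n := tsPow_subset_genMod P n x hx
  clear hx
  -- it suffices to prove vanishing on the generators
  induction hx' using Submodule.span_induction with
  | zero => exact map_zero f
  | add x y _ _ hx hy => rw [map_add, hx, hy, add_zero]
  | smul c x _ hx => rw [map_smul, hx, smul_zero]
  | mem t ht =>
    obtain ⟨w, q, hq, rfl⟩ := genSet_structure P n t ht
    -- rewrite each factor as a difference of group elements
    have hfac : (List.ofFn fun j : Fin n =>
        (of ℚ G (q j).1 - of ℚ G (q j).2) * of ℚ G (w j.succ)) =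
        List.ofFn fun j : Fin n =>
          of ℚ G ((q j).1 * w j.succ) - of ℚ G ((q j).2 * w j.succ) := by
      congr 1
      funext j
      rw [sub_mul, map_mul, map_mul]
    rw [hfac, List.ofFn_eq_map,
      list_expand (fun j : Fin n => of ℚ G ((q j).1 * w j.succ))
        (fun j : Fin n => of ℚ G ((q j).2 * w j.succ)) (List.finRange n)
        (List.nodup_finRange n)]
    rw [Finset.mul_sum, map_sum]
    have key : ∀ s : Finset (Fin n),
        of ℚ G (w 0) * ((List.finRange n).map fun j =>
          if j ∈ s then of ℚ G ((q j).2 * w j.succ)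
          else of ℚ G ((q j).1 * w j.succ)).prod =
        of ℚ G (w 0 * (List.ofFn fun j : Fin n =>
          (if j ∈ s then (q j).2 else (q j).1) * w j.succ).prod) := by
      intro s
      have hmap : ((List.finRange n).map fun j =>
          if j ∈ s then of ℚ G ((q j).2 * w j.succ)
          else of ℚ G ((q j).1 * w j.succ)) =
          ((List.finRange n).map fun j =>
            (if j ∈ s then (q j).2 else (q j).1) * w j.succ).map (of ℚ G) := by
        rw [List.map_map]
        refine List.map_congr_left fun j _ => ?_
        by_cases h : j ∈ s <;> simp [h]
      rw [hmap, ← List.ofFn_eq_map,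
        List.prod_hom _ (of ℚ G), ← map_mul]
    have : ∀ s ∈ (List.finRange n).toFinset.powerset,
        f (((-1 : ℚ) ^ s.card) • (of ℚ G (w 0) * ((List.finRange n).map fun j =>
          if j ∈ s then of ℚ G ((q j).2 * w j.succ)
          else of ℚ G ((q j).1 * w j.succ)).prod)) =
        ((-1 : ℚ) ^ s.card) * r (w 0 * (List.ofFn fun j : Fin n =>
          (if j ∈ s then (q j).2 else (q j).1) * w j.succ).prod) := by
      intro s _
      rw [map_smul, smul_eq_mul, key s, hf]
    calc ∑ s ∈ (List.finRange n).toFinset.powerset,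
          f (of ℚ G (w 0) * (((-1:ℚ) ^ s.card) • ((List.finRange n).map fun j =>
            if j ∈ s then of ℚ G ((q j).2 * w j.succ)
            else of ℚ G ((q j).1 * w j.succ)).prod))
        = ∑ s ∈ (List.finRange n).toFinset.powerset,
          ((-1 : ℚ) ^ s.card) * r (w 0 * (List.ofFn fun j : Fin n =>
            (if j ∈ s then (q j).2 else (q j).1) * w j.succ).prod) := by
          refine Finset.sum_congr rfl fun s hs => ?_
          rw [mul_smul_comm]
          exact this s hs
      _ = 0 := by
          rw [List.toFinset_finRange, Finset.powerset_univ]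
          exact hr w q hq
end

section
/- Combining the above: let G be a group, P a set of pairs of elements of G, J ⊆ Q[G] the ideal generated by {u - v : (u,v) ∈ P}, H the subgroup of G generated by {u v^{-1} : (u,v) ∈ P}, and r : G → Q a function whose linear extension vanishes on J^n. Then for every p ∈ LCS_n(H) and every x ∈ G, r(p x) = r(x). -/
open MonoidAlgebra

/-- Lower central series of a subgroup, indexed so that `LCS H 0 = LCS₁(H) = H`
and `LCS H n = LCS_{n+1}(H) = [H, LCS_n(H)]`. -/
def LCS {G : Type*} [Group G] (H : Subgroup G) : ℕ → Subgroup G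
  | 0 => H
  | n + 1 => ⁅H, LCS H n⁆

lemma le_tsPow_one {A : Type*} [Ring A] (J : TwoSidedIdeal A) : J ≤ tsPow J 1 := by
  intro a ha
  have : a = a * 1 := (mul_one a).symm
  rw [this]
  exact TwoSidedIdeal.subset_span ⟨a, ha, 1, trivial, rfl⟩

/-- multiplication on the right by an element of `J` raises the power by one. -/
lemma tsPow_mul_right {A : Type*} [Ring A] (J : TwoSidedIdeal A) :
    ∀ n, ∀ x ∈ tsPow J n, ∀ c ∈ J, x * c ∈ tsPow J (n + 1) := by
  intro n
  induction n with
  | zero =>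
    intro x _ c hc
    exact le_tsPow_one J (J.mul_mem_left x c hc)
  | succ n ih =>
    intro x hx c hc
    rw [show tsPow J (n+1) = TwoSidedIdeal.span {x | ∃ a ∈ J, ∃ b ∈ tsPow J n, x = a * b}
      from rfl, TwoSidedIdeal.mem_span_iff_mem_addSubgroup_closure] at hx
    induction hx using AddSubgroup.closure_induction with
    | mem z hz =>
      obtain ⟨w, ⟨u, -, v, hv, rfl⟩, t, -, rfl⟩ := hz
      obtain ⟨a, ha, b, hb, rfl⟩ := hv
      have h1 : b * (t * c) ∈ tsPow J (n + 1) := ih b hb (t * c) (J.mul_mem_left t c hc)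
      have h2 : a * (b * (t * c)) ∈ tsPow J (n + 1 + 1) :=
        TwoSidedIdeal.subset_span ⟨a, ha, b * (t * c), h1, rfl⟩
      have h3 : u * (a * (b * (t * c))) ∈ tsPow J (n + 1 + 1) :=
        (tsPow J (n + 1 + 1)).mul_mem_left _ _ h2
      have : u * (a * b) * t * c = u * (a * (b * (t * c))) := by noncomm_ring
      rw [this]; exact h3
    | zero => simp only [zero_mul]; exact (tsPow J (n + 1 + 1)).zero_mem
    | add y z _ _ hy hz =>
      have : (y + z) * c = y * c + z * c := add_mul y z c
      rw [this]; exact (tsPow J (n + 1 + 1)).add_mem hy hz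
    | neg y _ hy =>
      have : (-y) * c = -(y * c) := neg_mul y c
      rw [this]; exact (tsPow J (n + 1 + 1)).neg_mem hy

/-- For a two-sided ideal `I` of the group algebra, `{g | of g - 1 ∈ I}` is a subgroup. -/
def fox (G : Type*) [Group G] (I : TwoSidedIdeal (MonoidAlgebra ℚ G)) : Subgroup G where
  carrier := {g | of ℚ G g - 1 ∈ I}
  one_mem' := by
    show of ℚ G 1 - 1 ∈ I
    rw [map_one, sub_self]; exact I.zero_mem
  mul_mem' := by
    intro a b ha hb
    have : of ℚ G (a * b) - 1 = (of ℚ G a - 1) * of ℚ G b + (of ℚ G b - 1) := by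
      rw [map_mul]; noncomm_ring
    simpa only [Set.mem_setOf_eq, this] using I.add_mem (I.mul_mem_right _ _ ha) hb
  inv_mem' := by
    intro a ha
    have h1 : of ℚ G a * of ℚ G a⁻¹ = 1 := by rw [← map_mul, mul_inv_cancel, map_one]
    have : of ℚ G a⁻¹ - 1 = -((of ℚ G a - 1) * of ℚ G a⁻¹) := by
      rw [sub_mul, h1]; noncomm_ring
    simpa only [Set.mem_setOf_eq, this] using I.neg_mem (I.mul_mem_right _ _ ha)

lemma comm_identity {A : Type*} [Ring A] (h q h' q' : A)
    (hh : h * h' = 1) (hq : q * q' = 1) :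
    h * q * h' * q' - 1 = ((h - 1) * (q - 1) - (q - 1) * (h - 1)) * h' * q' := by
  have e1 : (h - 1) * (q - 1) - (q - 1) * (h - 1) = h * q - q * h := by noncomm_ring
  rw [e1, sub_mul, sub_mul, mul_assoc q h h', hh, mul_one, hq]

theorem invariant_unchanged_by_lcs {G : Type*} [Group G]
    (P : Set (G × G)) (r : G → ℚ)
    (f : MonoidAlgebra ℚ G →ₗ[ℚ] ℚ) (hf : ∀ g : G, f (of ℚ G g) = r g)
    (n : ℕ) (hn : 1 ≤ n)
    (hvanish : ∀ x ∈ tsPow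
        (TwoSidedIdeal.span
          {x : MonoidAlgebra ℚ G | ∃ p ∈ P, x = of ℚ G p.1 - of ℚ G p.2}) n,
      f x = 0) :
    ∀ p ∈ LCS (Subgroup.closure {g : G | ∃ q ∈ P, g = q.1 * q.2⁻¹}) (n - 1),
      ∀ x : G, r (p * x) = r x := by
  set J := TwoSidedIdeal.span
      {x : MonoidAlgebra ℚ G | ∃ p ∈ P, x = of ℚ G p.1 - of ℚ G p.2} with hJ
  set H := Subgroup.closure {g : G | ∃ q ∈ P, g = q.1 * q.2⁻¹} with hH
  -- elements of H are 1 mod J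
  have hbase : H ≤ fox G J := by
    rw [hH, Subgroup.closure_le]
    rintro g ⟨⟨u, v⟩, hq, rfl⟩
    have h1 : of ℚ G v * of ℚ G v⁻¹ = 1 := by rw [← map_mul, mul_inv_cancel, map_one]
    have key : of ℚ G (u * v⁻¹) - 1 = (of ℚ G u - of ℚ G v) * of ℚ G v⁻¹ := by
      rw [map_mul, sub_mul, h1]
    show of ℚ G (u * v⁻¹) - 1 ∈ J
    rw [key]
    exact J.mul_mem_right _ _ (TwoSidedIdeal.subset_span ⟨(u, v), hq, rfl⟩)
  have key : ∀ k, LCS H k ≤ fox G (tsPow J (k + 1)) := by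
    intro k
    induction k with
    | zero =>
      intro g hg
      exact le_tsPow_one J (hbase hg)
    | succ k ih =>
      show ⁅H, LCS H k⁆ ≤ fox G (tsPow J (k + 1 + 1))
      rw [Subgroup.commutator_le]
      intro h hh q hq
      have ha : of ℚ G h - 1 ∈ J := hbase hh
      have hb : of ℚ G q - 1 ∈ tsPow J (k + 1) := ih hq
      have hab : (of ℚ G h - 1) * (of ℚ G q - 1) ∈ tsPow J (k + 1 + 1) :=
        TwoSidedIdeal.subset_span ⟨_, ha, _, hb, rfl⟩
      have hba : (of ℚ G q - 1) * (of ℚ G h - 1) ∈ tsPow J (k + 1 + 1) :=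
        tsPow_mul_right J (k + 1) _ hb _ ha
      have hhh : of ℚ G h * of ℚ G h⁻¹ = 1 := by rw [← map_mul, mul_inv_cancel, map_one]
      have hqq : of ℚ G q * of ℚ G q⁻¹ = 1 := by rw [← map_mul, mul_inv_cancel, map_one]
      open scoped commutatorElement in
      show of ℚ G ⁅h, q⁆ - 1 ∈ tsPow J (k + 1 + 1)
      open scoped commutatorElement in
      have : of ℚ G ⁅h, q⁆ - 1 =
          ((of ℚ G h - 1) * (of ℚ G q - 1) - (of ℚ G q - 1) * (of ℚ G h - 1)) *
            of ℚ G h⁻¹ * of ℚ G q⁻¹ := by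
        rw [commutatorElement_def, map_mul, map_mul, map_mul]
        exact comm_identity _ _ _ _ hhh hqq
      rw [this]
      exact (tsPow J (k + 1 + 1)).mul_mem_right _ _
        ((tsPow J (k + 1 + 1)).mul_mem_right _ _ ((tsPow J (k + 1 + 1)).sub_mem hab hba))
  intro p hp x
  have hp' : of ℚ G p - 1 ∈ tsPow J n := by
    have := key (n - 1) hp
    have heq : n - 1 + 1 = n := Nat.succ_pred_eq_of_pos hn
    rwa [heq] at this
  have hmem : (of ℚ G p - 1) * of ℚ G x ∈ tsPow J n :=
    (tsPow J n).mul_mem_right _ _ hp'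
  have h0 : f ((of ℚ G p - 1) * of ℚ G x) = 0 := hvanish _ hmem
  have heq : (of ℚ G p - 1) * of ℚ G x = of ℚ G (p * x) - of ℚ G x := by
    rw [map_mul, sub_mul, one_mul]
  rw [heq, map_sub, hf, hf] at h0
  linarith
end
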